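/- In the heterogeneous HK dynamics, if every confidence bound satisfies r_i ≥ 1/2, then for any initial opinions in [0,1] the system converges in finite time. -/

import Mathlib

open Finset Filter Topology

/-- Neighbor set of agent `i` given confidence bounds `r` and opinion profile `y`. -/
noncomputable def hkN {n : ℕ} (r : Fin n → ℝ) (y : Fin n → ℝ) (i : Fin n) : Finset (Fin n) :=
  Finset.univ.filter fun j => |y j - y i| ≤ r i

/-- The heterogeneous Hegselmann-Krause update rule. -/
def isHK {n : ℕ} (r : Fin n → ℝ) (x : ℕ → Fin n → ℝ) : Prop :=
  ∀ t i, x (t + 1) i = (∑ j ∈ hkN r (x t) i, x t j) / ((hkN r (x t) i).card : ℝ)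

namespace Stmt14


variable {m : ℕ}

/-- average upper bound -/
lemma avg_le {s : Finset (Fin m)} (hs : s.Nonempty) {f : Fin m → ℝ} {c : ℝ}
    (h : ∀ j ∈ s, f j ≤ c) : (∑ j ∈ s, f j) / (s.card : ℝ) ≤ c := by
  have hc : (0:ℝ) < s.card := by exact_mod_cast card_pos.mpr hs
  rw [div_le_iff₀ hc]
  have := Finset.sum_le_card_nsmul s f c h
  simpa [nsmul_eq_mul, mul_comm] using this

lemma le_avg {s : Finset (Fin m)} (hs : s.Nonempty) {f : Fin m → ℝ} {c : ℝ}
    (h : ∀ j ∈ s, c ≤ f j) : c ≤ (∑ j ∈ s, f j) / (s.card : ℝ) := by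
  have hc : (0:ℝ) < s.card := by exact_mod_cast card_pos.mpr hs
  rw [le_div_iff₀ hc]
  have := Finset.card_nsmul_le_sum s f c h
  simpa [nsmul_eq_mul, mul_comm] using this

lemma lt_avg {s : Finset (Fin m)} (hs : s.Nonempty) {f : Fin m → ℝ} {c : ℝ}
    (h : ∀ j ∈ s, c < f j) : c < (∑ j ∈ s, f j) / (s.card : ℝ) := by
  have hc : (0:ℝ) < s.card := by exact_mod_cast card_pos.mpr hs
  rw [lt_div_iff₀ hc]
  have h2 : ∑ _j ∈ s, c < ∑ j ∈ s, f j :=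
    Finset.sum_lt_sum_of_nonempty hs h
  simpa [mul_comm] using h2

/-- if the average equals an upper bound, every value equals it -/
lemma all_eq_of_avg_eq {s : Finset (Fin m)} (hs : s.Nonempty) {f : Fin m → ℝ} {c : ℝ}
    (h : ∀ j ∈ s, f j ≤ c) (havg : (∑ j ∈ s, f j) / (s.card : ℝ) = c) :
    ∀ j ∈ s, f j = c := by
  by_contra hcon
  push_neg at hcon
  obtain ⟨j0, hj0, hne⟩ := hcon
  have hlt : f j0 < c := lt_of_le_of_ne (h j0 hj0) hne
  have hsum : ∑ j ∈ s, f j < ∑ _j ∈ s, c :=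
    Finset.sum_lt_sum h ⟨j0, hj0, hlt⟩
  have hc : (0:ℝ) < s.card := by exact_mod_cast card_pos.mpr hs
  have : (∑ j ∈ s, f j) / (s.card : ℝ) < c := by
    rw [div_lt_iff₀ hc]
    simpa [mul_comm] using hsum
  linarith [havg ▸ this]

/-- average boost: if all values are ≥ c and one is ≥ c + d, the average is ≥ c + d/n -/
lemma avg_boost {s : Finset (Fin m)} {i : Fin m} (hi : i ∈ s) {N : ℕ}
    (hcard : s.card ≤ N) {f : Fin m → ℝ} {c d : ℝ}
    (hall : ∀ j ∈ s, c ≤ f j) (hfi : c + d ≤ f i) (hd : 0 ≤ d) :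
    c + d / (N : ℝ) ≤ (∑ j ∈ s, f j) / (s.card : ℝ) := by
  have hs : s.Nonempty := ⟨i, hi⟩
  have hc : (0:ℝ) < s.card := by exact_mod_cast card_pos.mpr hs
  have hN : (0:ℝ) < N := lt_of_lt_of_le hc (by exact_mod_cast hcard)
  have hsum : (s.card : ℝ) * c + d ≤ ∑ j ∈ s, f j := by
    rw [← Finset.sum_erase_add s f hi]
    have h1 : ((s.erase i).card : ℝ) * c ≤ ∑ j ∈ s.erase i, f j := by
      have := Finset.card_nsmul_le_sum (s.erase i) f c
        (fun j hj => hall j (Finset.mem_of_mem_erase hj))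
      simpa [nsmul_eq_mul] using this
    have hcarde : ((s.erase i).card : ℝ) = (s.card : ℝ) - 1 := by
      rw [Finset.card_erase_of_mem hi]
      have : 1 ≤ s.card := Finset.card_pos.mpr hs
      push_cast [Nat.cast_sub this]
      ring
    rw [hcarde] at h1
    linarith
  rw [le_div_iff₀ hc]
  have hcN : (s.card : ℝ) ≤ N := by exact_mod_cast hcard
  have : d / N * s.card ≤ d := by
    rw [div_mul_eq_mul_div, div_le_iff₀ hN]
    nlinarith
  nlinarith

/-- average drop: dual of avg_boost -/
lemma avg_drop {s : Finset (Fin m)} {i : Fin m} (hi : i ∈ s) {N : ℕ}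
    (hcard : s.card ≤ N) {f : Fin m → ℝ} {c d : ℝ}
    (hall : ∀ j ∈ s, f j ≤ c) (hfi : f i ≤ c - d) (hd : 0 ≤ d) :
    (∑ j ∈ s, f j) / (s.card : ℝ) ≤ c - d / (N : ℝ) := by
  have := avg_boost hi hcard (f := fun j => -f j) (c := -c) (d := d)
    (fun j hj => by simpa using neg_le_neg (hall j hj))
    (by show -c + d ≤ -f i; linarith) hd
  have hs : s.Nonempty := ⟨i, hi⟩
  have hc : (0:ℝ) < s.card := by exact_mod_cast card_pos.mpr hs
  rw [Finset.sum_neg_distrib] at this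
  rw [neg_div] at this
  linarith

/-- down-set lemma: if every element of V ⊆ B is ≤ every element of B \ V,
then card B * sum V ≤ card V * sum B. -/
lemma downset_sum {V B : Finset (Fin m)} (hVB : V ⊆ B) {f : Fin m → ℝ}
    (h : ∀ v ∈ V, ∀ w ∈ B \ V, f v ≤ f w) :
    (B.card : ℝ) * ∑ v ∈ V, f v ≤ (V.card : ℝ) * ∑ w ∈ B, f w := by
  have hsplit : ∑ w ∈ B \ V, f w + ∑ v ∈ V, f v = ∑ w ∈ B, f w :=
    Finset.sum_sdiff hVB
  have hcard : ((B \ V).card : ℕ) + V.card = B.card := by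
    rw [Finset.card_sdiff_of_subset hVB]
    have := Finset.card_le_card hVB
    omega
  have key : ((B \ V).card : ℝ) * ∑ v ∈ V, f v ≤ (V.card : ℝ) * ∑ w ∈ B \ V, f w := by
    have h1 : ∑ v ∈ V, ((B \ V).card : ℝ) * f v ≤ ∑ v ∈ V, ∑ w ∈ B \ V, f w := by
      apply Finset.sum_le_sum
      intro v hv
      have : ∑ _w ∈ B \ V, f v ≤ ∑ w ∈ B \ V, f w :=
        Finset.sum_le_sum (fun w hw => h v hv w hw)
      simpa [mul_comm] using this
    calc ((B \ V).card : ℝ) * ∑ v ∈ V, f v = ∑ v ∈ V, ((B \ V).card : ℝ) * f v := by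
          rw [Finset.mul_sum]
      _ ≤ ∑ v ∈ V, ∑ w ∈ B \ V, f w := h1
      _ = (V.card : ℝ) * ∑ w ∈ B \ V, f w := by
          rw [Finset.sum_const, nsmul_eq_mul]
  have hBc : (B.card : ℝ) = ((B \ V).card : ℝ) + V.card := by exact_mod_cast hcard.symm
  have e1 : ∑ w ∈ B, f w = ∑ w ∈ B \ V, f w + ∑ v ∈ V, f v := hsplit.symm
  rw [hBc, e1]
  nlinarith [key]


/-- two-block average lower bound -/
lemma two_block_lower {S1 S2 A V k c1 c2 NN : ℝ}
    (hk : k = A + V) (hA : 1 ≤ A) (hV : 1 ≤ V) (hkn : k ≤ NN)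
    (h1 : A * c1 ≤ S1) (h2 : V * c2 ≤ S2) (hc : c1 ≤ c2) :
    c1 + (c2 - c1) / NN ≤ (S1 + S2) / k := by
  have hk0 : (0:ℝ) < k := by nlinarith
  have hN0 : (0:ℝ) < NN := lt_of_lt_of_le hk0 hkn
  rw [le_div_iff₀ hk0]
  have hdiv : (c2 - c1) / NN * k ≤ (c2 - c1) := by
    rw [div_mul_eq_mul_div, div_le_iff₀ hN0]
    nlinarith
  have hV1 : 0 ≤ (V - 1) * (c2 - c1) := by nlinarith
  have e : A * c1 + V * c2 = k * c1 + (c2 - c1) + (V - 1) * (c2 - c1) := by rw [hk]; ring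
  nlinarith

/-- two-block average upper bound -/
lemma two_block_upper {S1 S2 A V k c1 c2 NN : ℝ}
    (hk : k = A + V) (hA : 1 ≤ A) (hV : 1 ≤ V) (hkn : k ≤ NN)
    (h1 : S1 ≤ A * c1) (h2 : S2 ≤ V * c2) (hc : c1 ≤ c2) :
    (S1 + S2) / k ≤ c2 - (c2 - c1) / NN := by
  have hmain := two_block_lower (S1 := -S2) (S2 := -S1) (A := V) (V := A) (k := k)
    (c1 := -c2) (c2 := -c1) (NN := NN) (by rw [hk]; ring) hV hA hkn
    (by nlinarith) (by nlinarith) (by linarith)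
  have hk0 : (0:ℝ) < k := by nlinarith
  have e : (-S2 + -S1) / k = -((S1 + S2) / k) := by ring
  rw [e] at hmain
  have e2 : (-c1 - -c2) / NN = (c2 - c1) / NN := by ring
  rw [e2] at hmain
  linarith

/-- unbounded additive progress on a bounded monotone sequence is impossible -/
lemma no_unbounded_progress (g : ℕ → ℝ) (δ : ℝ) (hδ : 0 < δ)
    (hm : ∀ s t : ℕ, s ≤ t → g s ≤ g t) (hub : ∀ t, g t ≤ 1/2) (h0 : 0 ≤ g 0)
    (C : ∀ t : ℕ, ∃ s, t ≤ s ∧ g s + δ ≤ g (s + 1)) : False := by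
  choose F hF1 hF2 using C
  let f : ℕ → ℕ := fun k => Nat.rec (F 0) (fun _ prev => F (prev + 1) + 1) k
  have hf0 : f 0 = F 0 := rfl
  have hfs : ∀ k, f (k + 1) = F (f k + 1) + 1 := fun k => rfl
  have key : ∀ k : ℕ, g 0 + k * δ ≤ g (f k) := by
    intro k
    induction k with
    | zero => simpa [hf0] using hm 0 (F 0) (hF1 0)
    | succ k ih =>
      have h1 : g (f k) ≤ g (F (f k + 1)) :=
        hm _ _ (le_trans (Nat.le_succ _) (hF1 (f k + 1)))
      have h2 : g (F (f k + 1)) + δ ≤ g (F (f k + 1) + 1) := hF2 (f k + 1)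
      rw [hfs]
      push_cast
      linarith
  obtain ⟨K, hK⟩ := exists_nat_gt ((1/2) / δ)
  have hKδ : 1/2 < K * δ := by
    rw [div_lt_iff₀ hδ] at hK
    linarith
  have := key K
  have := hub (f K)
  linarith

/-- a nonincreasing nonnegative sequence with unboundedly many q-contractions gets below any ε -/
lemma contract_to_zero (u : ℕ → ℝ) (q : ℝ) (hq0 : 0 ≤ q) (hq1 : q < 1)
    (hm : ∀ s t : ℕ, s ≤ t → u t ≤ u s) (hu0 : u 0 ≤ 1/2) (hnn : ∀ t, 0 ≤ u t)
    (C : ∀ t : ℕ, ∃ s, t ≤ s ∧ u (s + 1) ≤ q * u s) :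
    ∀ ε : ℝ, 0 < ε → ∃ t, u t < ε := by
  choose F hF1 hF2 using C
  let f : ℕ → ℕ := fun k => Nat.rec (F 0 + 1) (fun _ prev => F prev + 1) k
  have hf0 : f 0 = F 0 + 1 := rfl
  have hfs : ∀ k, f (k + 1) = F (f k) + 1 := fun k => rfl
  have key : ∀ k : ℕ, u (f k) ≤ q ^ (k + 1) * (1/2) := by
    intro k
    induction k with
    | zero =>
      have h1 : u (F 0 + 1) ≤ q * u (F 0) := hF2 0
      have h2 : u (F 0) ≤ u 0 := hm 0 (F 0) (Nat.zero_le _)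
      have : u (F 0 + 1) ≤ q * (1/2) := by nlinarith
      simpa [hf0, pow_succ, pow_zero] using this
    | succ k ih =>
      have h1 : u (F (f k) + 1) ≤ q * u (F (f k)) := hF2 (f k)
      have h2 : u (F (f k)) ≤ u (f k) := hm _ _ (hF1 (f k))
      rw [hfs]
      calc u (F (f k) + 1) ≤ q * u (F (f k)) := h1
        _ ≤ q * u (f k) := by nlinarith
        _ ≤ q * (q ^ (k + 1) * (1/2)) := by nlinarith [hnn (f k)]
        _ = q ^ (k + 1 + 1) * (1/2) := by ring
  intro ε hε
  obtain ⟨k, hk⟩ := exists_pow_lt_of_lt_one hε hq1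
  refine ⟨f k, lt_of_le_of_lt (key k) ?_⟩
  have : q ^ (k + 1) ≤ q ^ k := pow_le_pow_of_le_one hq0 (le_of_lt hq1) (Nat.le_succ k)
  have hqk : (0:ℝ) ≤ q ^ (k+1) := pow_nonneg hq0 _
  nlinarith


section Dyn

variable {n : ℕ} {r : Fin n → ℝ} {x : ℕ → Fin n → ℝ}

noncomputable def Aset (x : ℕ → Fin n → ℝ) (t : ℕ) : Finset (Fin n) :=
  Finset.univ.filter fun i => x t i ≤ 1/2

noncomputable def Bset (x : ℕ → Fin n → ℝ) (t : ℕ) : Finset (Fin n) :=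
  Finset.univ.filter fun i => 1/2 < x t i

noncomputable def aval (x : ℕ → Fin n → ℝ) (t : ℕ) : ℝ :=
  (∑ i ∈ Aset x t, x t i) / ((Aset x t).card : ℝ)

noncomputable def bval (x : ℕ → Fin n → ℝ) (t : ℕ) : ℝ :=
  (∑ i ∈ Bset x t, x t i) / ((Bset x t).card : ℝ)

structure Ctx (n : ℕ) (r : Fin n → ℝ) (x : ℕ → Fin n → ℝ) : Prop where
  hn : 0 < n
  hhalf : ∀ i, (1:ℝ)/2 ≤ r i
  hHK : isHK r x
  hx : ∀ t i, 0 ≤ x t i ∧ x t i ≤ 1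
  hnf : ∀ t, x (t + 1) ≠ x t

lemma mem_hkN {y : Fin n → ℝ} {i j : Fin n} : j ∈ hkN r y i ↔ |y j - y i| ≤ r i := by
  simp [hkN]

lemma mem_Aset {t : ℕ} {i : Fin n} : i ∈ Aset x t ↔ x t i ≤ 1/2 := by simp [Aset]

lemma mem_Bset {t : ℕ} {i : Fin n} : i ∈ Bset x t ↔ 1/2 < x t i := by simp [Bset]

lemma self_mem_hkN (hC : Ctx n r x) (t : ℕ) (i : Fin n) : i ∈ hkN r (x t) i := by
  rw [mem_hkN]
  simp only [sub_self, abs_zero]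
  linarith [hC.hhalf i]

lemma hkN_card_pos (hC : Ctx n r x) (t : ℕ) (i : Fin n) :
    (0:ℝ) < ((hkN r (x t) i).card : ℝ) := by
  have : (hkN r (x t) i).Nonempty := ⟨i, self_mem_hkN hC t i⟩
  exact_mod_cast card_pos.mpr this

lemma card_le_n (s : Finset (Fin n)) : s.card ≤ n := by
  simpa using Finset.card_le_univ s

/-- values remain in [0,1] -/
lemma range01 (hn : 0 < n) (hhalf : ∀ i, (1:ℝ)/2 ≤ r i) (hHK : isHK r x)
    (hx0 : ∀ i, x 0 i ∈ Set.Icc (0:ℝ) 1) : ∀ t i, 0 ≤ x t i ∧ x t i ≤ 1 := by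
  intro t
  induction t with
  | zero => exact fun i => ⟨(hx0 i).1, (hx0 i).2⟩
  | succ t ih =>
    intro i
    have hself : i ∈ hkN r (x t) i := by
      rw [mem_hkN]; simp only [sub_self, abs_zero]; linarith [hhalf i]
    have hne : (hkN r (x t) i).Nonempty := ⟨i, hself⟩
    rw [hHK t i]
    constructor
    · exact le_avg hne (fun j _ => (ih j).1)
    · exact avg_le hne (fun j _ => (ih j).2)

/-- if diameter ≤ 1/2 at time t then everyone moves to the global average -/
lemma diam_step (hC : Ctx n r x) (t : ℕ) (h : ∀ i j, x t j - x t i ≤ 1/2) :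
    ∀ i, x (t+1) i = (∑ j, x t j) / (n : ℝ) := by
  intro i
  have hN : hkN r (x t) i = Finset.univ := by
    ext j
    simp only [Finset.mem_univ, iff_true, mem_hkN]
    have := h i j
    have := h j i
    have habs : |x t j - x t i| ≤ 1/2 := abs_le.mpr ⟨by linarith, by linarith⟩
    linarith [hC.hhalf i]
  rw [hC.hHK t i, hN, Finset.card_univ, Fintype.card_fin]

/-- under non-fixation, diameter is always > 1/2 -/
lemma diam_ex (hC : Ctx n r x) (t : ℕ) : ∃ i j, 1/2 < x t j - x t i := by
  by_contra hcon
  push_neg at hcon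
  have h1 := diam_step hC t hcon
  have h2 : ∀ i, x (t+2) i = (∑ j, x (t+1) j) / (n : ℝ) := by
    apply diam_step hC (t+1)
    intro i j
    rw [h1 i, h1 j]
    simp
  apply hC.hnf (t+1)
  have hn0 : ((n:ℝ)) ≠ 0 := by
    have := hC.hn; positivity
  have hsum : ∑ j, x (t+1) j = (n:ℝ) * ((∑ j, x t j) / (n:ℝ)) := by
    rw [Finset.sum_congr rfl (fun j _ => h1 j)]
    rw [Finset.sum_const, Finset.card_univ, Fintype.card_fin, nsmul_eq_mul]
  funext i
  rw [show t+1+1 = t+2 from rfl, h2 i, h1 i, hsum]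
  field_simp

lemma Aset_nonempty (hC : Ctx n r x) (t : ℕ) : (Aset x t).Nonempty := by
  obtain ⟨i, j, hij⟩ := diam_ex hC t
  exact ⟨i, mem_Aset.mpr (by linarith [(hC.hx t j).2])⟩

lemma Bset_nonempty (hC : Ctx n r x) (t : ℕ) : (Bset x t).Nonempty := by
  obtain ⟨i, j, hij⟩ := diam_ex hC t
  exact ⟨j, mem_Bset.mpr (by linarith [(hC.hx t i).1])⟩

lemma aval_le_half (hC : Ctx n r x) (t : ℕ) : aval x t ≤ 1/2 :=
  avg_le (Aset_nonempty hC t) (fun j hj => mem_Aset.mp hj)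

lemma aval_nonneg (hC : Ctx n r x) (t : ℕ) : 0 ≤ aval x t :=
  le_avg (Aset_nonempty hC t) (fun j _ => (hC.hx t j).1)

lemma half_lt_bval (hC : Ctx n r x) (t : ℕ) : 1/2 < bval x t :=
  lt_avg (Bset_nonempty hC t) (fun j hj => mem_Bset.mp hj)

lemma bval_le_one (hC : Ctx n r x) (t : ℕ) : bval x t ≤ 1 :=
  avg_le (Bset_nonempty hC t) (fun j _ => (hC.hx t j).2)

lemma Aclique (hC : Ctx n r x) (t : ℕ) {i : Fin n} (hi : x t i ≤ 1/2) :
    Aset x t ⊆ hkN r (x t) i := by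
  intro j hj
  rw [mem_Aset] at hj
  rw [mem_hkN]
  have h1 := (hC.hx t j).1
  have h2 := (hC.hx t i).1
  have habs : |x t j - x t i| ≤ 1/2 := abs_le.mpr ⟨by linarith, by linarith⟩
  linarith [hC.hhalf i]

lemma Bclique (hC : Ctx n r x) (t : ℕ) {i : Fin n} (hi : 1/2 < x t i) :
    Bset x t ⊆ hkN r (x t) i := by
  intro j hj
  rw [mem_Bset] at hj
  rw [mem_hkN]
  have h1 := (hC.hx t j).2
  have h2 := (hC.hx t i).2
  have habs : |x t j - x t i| ≤ 1/2 := abs_le.mpr ⟨by linarith, by linarith⟩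
  linarith [hC.hhalf i]

/-- the cross-neighbours of an A-agent lie in B -/
lemma Vsub (hC : Ctx n r x) (t : ℕ) {i : Fin n} :
    hkN r (x t) i \ Aset x t ⊆ Bset x t := by
  intro j hj
  rw [Finset.mem_sdiff, mem_Aset] at hj
  exact mem_Bset.mpr (by linarith [not_le.mp hj.2])

lemma Wsub (hC : Ctx n r x) (t : ℕ) {i : Fin n} :
    hkN r (x t) i \ Bset x t ⊆ Aset x t := by
  intro j hj
  rw [Finset.mem_sdiff, mem_Bset] at hj
  exact mem_Aset.mpr (by linarith [not_lt.mp hj.2])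

/-- cross-neighbours of an A-agent are a down-set of B: their sum is at most card * bval -/
lemma sumV_le (hC : Ctx n r x) (t : ℕ) {i : Fin n} (hi : x t i ≤ 1/2) :
    ∑ j ∈ hkN r (x t) i \ Aset x t, x t j
      ≤ ((hkN r (x t) i \ Aset x t).card : ℝ) * bval x t := by
  set V := hkN r (x t) i \ Aset x t with hV
  have hVB : V ⊆ Bset x t := Vsub hC t
  have hds : ∀ v ∈ V, ∀ w ∈ Bset x t \ V, x t v ≤ x t w := by
    intro v hv w hw
    rw [Finset.mem_sdiff] at hv hw
    have hvN : v ∈ hkN r (x t) i := hv.1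
    rw [mem_hkN] at hvN
    have hv1 : x t v ≤ x t i + r i := by
      have := abs_le.mp hvN
      linarith [this.2]
    have hwB : 1/2 < x t w := mem_Bset.mp hw.1
    have hwnotN : w ∉ hkN r (x t) i := by
      intro hwN
      exact hw.2 (by rw [hV, Finset.mem_sdiff]; exact ⟨hwN, fun hwA => by
        have := mem_Aset.mp hwA; linarith⟩)
    rw [mem_hkN] at hwnotN
    push_neg at hwnotN
    have hge : 0 ≤ x t w - x t i := by linarith
    rw [abs_of_nonneg hge] at hwnotN
    linarith
  have hkey := downset_sum hVB (f := x t) hds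
  have hBc : (0:ℝ) < ((Bset x t).card : ℝ) := by
    exact_mod_cast card_pos.mpr (Bset_nonempty hC t)
  rw [bval]
  rw [show ((V.card:ℝ)) * ((∑ i ∈ Bset x t, x t i) / ((Bset x t).card:ℝ))
      = ((V.card:ℝ) * ∑ i ∈ Bset x t, x t i) / ((Bset x t).card:ℝ) from by ring]
  rw [le_div_iff₀ hBc]
  nlinarith [hkey]

/-- cross-neighbours of a B-agent are an up-set of A: their sum is at least card * aval -/
lemma sumW_ge (hC : Ctx n r x) (t : ℕ) {i : Fin n} (hi : 1/2 < x t i) :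
    ((hkN r (x t) i \ Bset x t).card : ℝ) * aval x t
      ≤ ∑ j ∈ hkN r (x t) i \ Bset x t, x t j := by
  set W := hkN r (x t) i \ Bset x t with hW
  have hWA : W ⊆ Aset x t := Wsub hC t
  have hus : ∀ w ∈ W, ∀ v ∈ Aset x t \ W, (fun j => -(x t j)) w ≤ (fun j => -(x t j)) v := by
    intro w hw v hv
    simp only
    rw [Finset.mem_sdiff] at hw hv
    have hwN : w ∈ hkN r (x t) i := hw.1
    rw [mem_hkN] at hwN
    have hw1 : x t i - r i ≤ x t w := by
      have := abs_le.mp hwN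
      linarith [this.1]
    have hvA : x t v ≤ 1/2 := mem_Aset.mp hv.1
    have hvnotN : v ∉ hkN r (x t) i := by
      intro hvN
      exact hv.2 (by rw [hW, Finset.mem_sdiff]; exact ⟨hvN, fun hvB => by
        have := mem_Bset.mp hvB; linarith⟩)
    rw [mem_hkN] at hvnotN
    push_neg at hvnotN
    have hge : x t v - x t i ≤ 0 := by linarith
    rw [abs_of_nonpos hge] at hvnotN
    linarith
  have hkey := downset_sum hWA (f := fun j => -(x t j)) hus
  have hAc : (0:ℝ) < ((Aset x t).card : ℝ) := by
    exact_mod_cast card_pos.mpr (Aset_nonempty hC t)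
  rw [Finset.sum_neg_distrib, Finset.sum_neg_distrib] at hkey
  rw [aval]
  rw [show ((W.card:ℝ)) * ((∑ i ∈ Aset x t, x t i) / ((Aset x t).card:ℝ))
      = ((W.card:ℝ) * ∑ i ∈ Aset x t, x t i) / ((Aset x t).card:ℝ) from by ring]
  rw [div_le_iff₀ hAc]
  nlinarith [hkey]

/-- the fundamental sandwich: every next value lies between aval and bval -/
lemma sandwich (hC : Ctx n r x) (t : ℕ) (i : Fin n) :
    aval x t ≤ x (t+1) i ∧ x (t+1) i ≤ bval x t := by
  have hNc := hkN_card_pos hC t i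
  have ha2 := aval_le_half hC t
  have hb2 := half_lt_bval hC t
  have hAc : (0:ℝ) < ((Aset x t).card : ℝ) := by
    exact_mod_cast card_pos.mpr (Aset_nonempty hC t)
  have hBc : (0:ℝ) < ((Bset x t).card : ℝ) := by
    exact_mod_cast card_pos.mpr (Bset_nonempty hC t)
  by_cases hi : x t i ≤ 1/2
  · have hsub := Aclique hC t hi
    have hsplit : ∑ j ∈ hkN r (x t) i \ Aset x t, x t j + ∑ j ∈ Aset x t, x t j
        = ∑ j ∈ hkN r (x t) i, x t j := Finset.sum_sdiff hsub
    have hcard : (hkN r (x t) i \ Aset x t).card + (Aset x t).card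
        = (hkN r (x t) i).card := Finset.card_sdiff_add_card_eq_card hsub
    have hcardR : ((hkN r (x t) i \ Aset x t).card : ℝ) + ((Aset x t).card : ℝ)
        = ((hkN r (x t) i).card : ℝ) := by exact_mod_cast hcard
    have hSA : ∑ j ∈ Aset x t, x t j = ((Aset x t).card : ℝ) * aval x t := by
      rw [aval, mul_div_cancel₀]
      exact ne_of_gt hAc
    have hSV_lo : ((hkN r (x t) i \ Aset x t).card : ℝ) * aval x t
        ≤ ∑ j ∈ hkN r (x t) i \ Aset x t, x t j := by
      have := Finset.card_nsmul_le_sum (hkN r (x t) i \ Aset x t) (x t) (aval x t)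
        (fun j hj => by
          have := mem_Bset.mp (Vsub hC t hj)
          linarith)
      simpa [nsmul_eq_mul] using this
    have hSV_hi : ∑ j ∈ hkN r (x t) i \ Aset x t, x t j
        ≤ ((hkN r (x t) i \ Aset x t).card : ℝ) * bval x t := sumV_le hC t hi
    have hSA_hi : ∑ j ∈ Aset x t, x t j ≤ ((Aset x t).card : ℝ) * bval x t := by
      have := Finset.sum_le_card_nsmul (Aset x t) (x t) (bval x t)
        (fun j hj => by have := mem_Aset.mp hj; linarith)
      simpa [nsmul_eq_mul] using this
    rw [hC.hHK t i]
    constructor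
    · rw [le_div_iff₀ hNc]
      nlinarith [hSA, hSV_lo, hsplit, hcardR]
    · rw [div_le_iff₀ hNc]
      nlinarith [hSA_hi, hSV_hi, hsplit, hcardR]
  · push_neg at hi
    have hsub := Bclique hC t hi
    have hsplit : ∑ j ∈ hkN r (x t) i \ Bset x t, x t j + ∑ j ∈ Bset x t, x t j
        = ∑ j ∈ hkN r (x t) i, x t j := Finset.sum_sdiff hsub
    have hcard : (hkN r (x t) i \ Bset x t).card + (Bset x t).card
        = (hkN r (x t) i).card := Finset.card_sdiff_add_card_eq_card hsub
    have hcardR : ((hkN r (x t) i \ Bset x t).card : ℝ) + ((Bset x t).card : ℝ)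
        = ((hkN r (x t) i).card : ℝ) := by exact_mod_cast hcard
    have hSB : ∑ j ∈ Bset x t, x t j = ((Bset x t).card : ℝ) * bval x t := by
      rw [bval, mul_div_cancel₀]
      exact ne_of_gt hBc
    have hSW_lo : ((hkN r (x t) i \ Bset x t).card : ℝ) * aval x t
        ≤ ∑ j ∈ hkN r (x t) i \ Bset x t, x t j := sumW_ge hC t hi
    have hSW_hi : ∑ j ∈ hkN r (x t) i \ Bset x t, x t j
        ≤ ((hkN r (x t) i \ Bset x t).card : ℝ) * bval x t := by
      have := Finset.sum_le_card_nsmul (hkN r (x t) i \ Bset x t) (x t) (bval x t)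
        (fun j hj => by have := mem_Aset.mp (Wsub hC t hj); linarith)
      simpa [nsmul_eq_mul] using this
    have hSB_lo : ((Bset x t).card : ℝ) * aval x t ≤ ∑ j ∈ Bset x t, x t j := by
      have := Finset.card_nsmul_le_sum (Bset x t) (x t) (aval x t)
        (fun j hj => by have := mem_Bset.mp hj; linarith)
      simpa [nsmul_eq_mul] using this
    rw [hC.hHK t i]
    constructor
    · rw [le_div_iff₀ hNc]
      nlinarith [hSB, hSW_lo, hSB_lo, hsplit, hcardR]
    · rw [div_le_iff₀ hNc]
      nlinarith [hSB, hSW_hi, hsplit, hcardR]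

lemma aval_mono (hC : Ctx n r x) : Monotone (fun t => aval x t) := by
  apply monotone_nat_of_le_succ
  intro t
  exact le_avg (Aset_nonempty hC (t+1)) (fun j _ => (sandwich hC t j).1)

lemma bval_anti (hC : Ctx n r x) : Antitone (fun t => bval x t) := by
  apply antitone_nat_of_succ_le
  intro t
  exact avg_le (Bset_nonempty hC (t+1)) (fun j _ => (sandwich hC t j).2)

lemma gap (hC : Ctx n r x) (t : ℕ) : 1/2 < bval x t - aval x t := by
  obtain ⟨i, j, hij⟩ := diam_ex hC (t+1)
  have h1 := (sandwich hC t i).1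
  have h2 := (sandwich hC t j).2
  linarith

def Cross (r : Fin n → ℝ) (x : ℕ → Fin n → ℝ) (t : ℕ) : Prop :=
  ∃ i j, j ∈ hkN r (x t) i ∧
    ((x t i ≤ 1/2 ∧ 1/2 < x t j) ∨ (1/2 < x t i ∧ x t j ≤ 1/2))

lemma nocross_step (hC : Ctx n r x) (t : ℕ) (h : ¬ Cross r x t) :
    ∀ i, x (t+1) i = if x t i ≤ 1/2 then aval x t else bval x t := by
  intro i
  by_cases hi : x t i ≤ 1/2
  · rw [if_pos hi]
    have hNA : hkN r (x t) i = Aset x t := by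
      apply Finset.Subset.antisymm
      · intro j hj
        rw [mem_Aset]
        by_contra hj2
        push_neg at hj2
        exact h ⟨i, j, hj, Or.inl ⟨hi, hj2⟩⟩
      · exact Aclique hC t hi
    rw [hC.hHK t i, hNA, aval]
  · rw [if_neg hi]
    push_neg at hi
    have hNB : hkN r (x t) i = Bset x t := by
      apply Finset.Subset.antisymm
      · intro j hj
        rw [mem_Bset]
        by_contra hj2
        push_neg at hj2
        exact h ⟨i, j, hj, Or.inr ⟨hi, hj2⟩⟩
      · exact Bclique hC t hi
    rw [hC.hHK t i, hNB, bval]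

lemma cross_or_cross (hC : Ctx n r x) (t : ℕ) : Cross r x t ∨ Cross r x (t+1) := by
  by_contra hcon
  push_neg at hcon
  obtain ⟨h1, h2⟩ := hcon
  have e1 := nocross_step hC t h1
  have e2 := nocross_step hC (t+1) h2
  have ha2 := aval_le_half hC t
  have hb2 := half_lt_bval hC t
  have hmem : ∀ i, (x (t+1) i ≤ 1/2 ↔ x t i ≤ 1/2) := by
    intro i
    by_cases hi : x t i ≤ 1/2
    · rw [e1 i, if_pos hi]
      constructor
      · intro _; exact hi
      · intro _; exact ha2
    · rw [e1 i, if_neg hi]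
      constructor
      · intro hb
        linarith
      · intro hcc
        exact absurd hcc hi
  have haval1 : aval x (t+1) = aval x t := by
    have hAsub : ∀ j ∈ Aset x (t+1), x (t+1) j = aval x t := by
      intro j hj
      have hj2 := (hmem j).1 (mem_Aset.mp hj)
      rw [e1 j, if_pos hj2]
    have hAc : (0:ℝ) < ((Aset x (t+1)).card : ℝ) := by
      exact_mod_cast card_pos.mpr (Aset_nonempty hC (t+1))
    rw [aval, Finset.sum_congr rfl hAsub, Finset.sum_const, nsmul_eq_mul]
    field_simp
  have hbval1 : bval x (t+1) = bval x t := by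
    have hBsub : ∀ j ∈ Bset x (t+1), x (t+1) j = bval x t := by
      intro j hj
      have hj0 := mem_Bset.mp hj
      have hj2 : ¬ (x t j ≤ 1/2) := by
        intro hcc
        have := (hmem j).2 hcc
        linarith
      rw [e1 j, if_neg hj2]
    have hBc : (0:ℝ) < ((Bset x (t+1)).card : ℝ) := by
      exact_mod_cast card_pos.mpr (Bset_nonempty hC (t+1))
    rw [bval, Finset.sum_congr rfl hBsub, Finset.sum_const, nsmul_eq_mul]
    field_simp
  apply hC.hnf (t+1)
  funext i
  rw [show t+1+1 = (t+1)+1 from rfl, e2 i, haval1, hbval1, e1 i]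
  by_cases hi : x t i ≤ 1/2
  · simp only [if_pos hi]
    rw [if_pos ha2]
  · simp only [if_neg hi]
    rw [if_neg (not_le.mpr hb2)]

lemma cardR_pos {s : Finset (Fin n)} (hs : s.Nonempty) : (1:ℝ) ≤ (s.card : ℝ) := by
  have := card_pos.mpr hs
  exact_mod_cast this

lemma Amover_lower (hC : Ctx n r x) (t : ℕ) {i : Fin n} (hi : x t i ≤ 1/2)
    (hVne : (hkN r (x t) i \ Aset x t).Nonempty) {l : ℝ}
    (hlB : ∀ j ∈ Bset x t, l ≤ x t j) (hal : aval x t ≤ l) :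
    aval x t + (l - aval x t) / (n:ℝ) ≤ x (t+1) i := by
  have hsub := Aclique hC t hi
  have hsplit : ∑ j ∈ hkN r (x t) i \ Aset x t, x t j + ∑ j ∈ Aset x t, x t j
      = ∑ j ∈ hkN r (x t) i, x t j := Finset.sum_sdiff hsub
  have hcard : (hkN r (x t) i \ Aset x t).card + (Aset x t).card
      = (hkN r (x t) i).card := Finset.card_sdiff_add_card_eq_card hsub
  have hAc : (0:ℝ) < ((Aset x t).card : ℝ) := by
    exact_mod_cast card_pos.mpr (Aset_nonempty hC t)
  have hSA : ∑ j ∈ Aset x t, x t j = ((Aset x t).card : ℝ) * aval x t := by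
    rw [aval, mul_div_cancel₀]
    exact ne_of_gt hAc
  have hSV : ((hkN r (x t) i \ Aset x t).card : ℝ) * l
      ≤ ∑ j ∈ hkN r (x t) i \ Aset x t, x t j := by
    have := Finset.card_nsmul_le_sum (hkN r (x t) i \ Aset x t) (x t) l
      (fun j hj => hlB j (Vsub hC t hj))
    simpa [nsmul_eq_mul] using this
  have hmain := two_block_lower (S1 := ∑ j ∈ Aset x t, x t j)
    (S2 := ∑ j ∈ hkN r (x t) i \ Aset x t, x t j)
    (A := ((Aset x t).card : ℝ)) (V := ((hkN r (x t) i \ Aset x t).card : ℝ))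
    (k := ((hkN r (x t) i).card : ℝ)) (c1 := aval x t) (c2 := l) (NN := (n:ℝ))
    (by push_cast [← hcard]; ring) (cardR_pos (Aset_nonempty hC t)) (cardR_pos hVne)
    (by exact_mod_cast card_le_n _) (le_of_eq hSA.symm) hSV hal
  rw [hC.hHK t i, ← hsplit]
  calc aval x t + (l - aval x t) / (n:ℝ)
      ≤ (∑ j ∈ Aset x t, x t j + ∑ j ∈ hkN r (x t) i \ Aset x t, x t j)
        / ((hkN r (x t) i).card : ℝ) := hmain
    _ = (∑ j ∈ hkN r (x t) i \ Aset x t, x t j + ∑ j ∈ Aset x t, x t j)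
        / ((hkN r (x t) i).card : ℝ) := by ring

lemma Amover_upper (hC : Ctx n r x) (t : ℕ) {i : Fin n} (hi : x t i ≤ 1/2)
    (hVne : (hkN r (x t) i \ Aset x t).Nonempty) {h : ℝ}
    (hhA : ∀ j ∈ Aset x t, x t j ≤ h) (hhb : h ≤ bval x t) :
    x (t+1) i ≤ bval x t - (bval x t - h) / (n:ℝ) := by
  have hsub := Aclique hC t hi
  have hsplit : ∑ j ∈ hkN r (x t) i \ Aset x t, x t j + ∑ j ∈ Aset x t, x t j
      = ∑ j ∈ hkN r (x t) i, x t j := Finset.sum_sdiff hsub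
  have hcard : (hkN r (x t) i \ Aset x t).card + (Aset x t).card
      = (hkN r (x t) i).card := Finset.card_sdiff_add_card_eq_card hsub
  have hSA : ∑ j ∈ Aset x t, x t j ≤ ((Aset x t).card : ℝ) * h := by
    have := Finset.sum_le_card_nsmul (Aset x t) (x t) h hhA
    simpa [nsmul_eq_mul] using this
  have hmain := two_block_upper (S1 := ∑ j ∈ Aset x t, x t j)
    (S2 := ∑ j ∈ hkN r (x t) i \ Aset x t, x t j)
    (A := ((Aset x t).card : ℝ)) (V := ((hkN r (x t) i \ Aset x t).card : ℝ))
    (k := ((hkN r (x t) i).card : ℝ)) (c1 := h) (c2 := bval x t) (NN := (n:ℝ))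
    (by push_cast [← hcard]; ring) (cardR_pos (Aset_nonempty hC t)) (cardR_pos hVne)
    (by exact_mod_cast card_le_n _) hSA (sumV_le hC t hi) hhb
  rw [hC.hHK t i, ← hsplit]
  calc (∑ j ∈ hkN r (x t) i \ Aset x t, x t j + ∑ j ∈ Aset x t, x t j)
        / ((hkN r (x t) i).card : ℝ)
      = (∑ j ∈ Aset x t, x t j + ∑ j ∈ hkN r (x t) i \ Aset x t, x t j)
        / ((hkN r (x t) i).card : ℝ) := by ring
    _ ≤ bval x t - (bval x t - h) / (n:ℝ) := hmain

lemma Bmover_lower (hC : Ctx n r x) (t : ℕ) {i : Fin n} (hi : 1/2 < x t i)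
    (hWne : (hkN r (x t) i \ Bset x t).Nonempty) :
    aval x t + (bval x t - aval x t) / (n:ℝ) ≤ x (t+1) i := by
  have hsub := Bclique hC t hi
  have hsplit : ∑ j ∈ hkN r (x t) i \ Bset x t, x t j + ∑ j ∈ Bset x t, x t j
      = ∑ j ∈ hkN r (x t) i, x t j := Finset.sum_sdiff hsub
  have hcard : (hkN r (x t) i \ Bset x t).card + (Bset x t).card
      = (hkN r (x t) i).card := Finset.card_sdiff_add_card_eq_card hsub
  have hBc : (0:ℝ) < ((Bset x t).card : ℝ) := by
    exact_mod_cast card_pos.mpr (Bset_nonempty hC t)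
  have hSB : ∑ j ∈ Bset x t, x t j = ((Bset x t).card : ℝ) * bval x t := by
    rw [bval, mul_div_cancel₀]
    exact ne_of_gt hBc
  have hab : aval x t ≤ bval x t := by
    linarith [aval_le_half hC t, half_lt_bval hC t]
  have hmain := two_block_lower (S1 := ∑ j ∈ hkN r (x t) i \ Bset x t, x t j)
    (S2 := ∑ j ∈ Bset x t, x t j)
    (A := ((hkN r (x t) i \ Bset x t).card : ℝ)) (V := ((Bset x t).card : ℝ))
    (k := ((hkN r (x t) i).card : ℝ)) (c1 := aval x t) (c2 := bval x t) (NN := (n:ℝ))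
    (by push_cast [← hcard]; ring) (cardR_pos hWne) (cardR_pos (Bset_nonempty hC t))
    (by exact_mod_cast card_le_n _) (sumW_ge hC t hi) (le_of_eq hSB.symm) hab
  rw [hC.hHK t i, ← hsplit]
  exact hmain

lemma Bmover_upper (hC : Ctx n r x) (t : ℕ) {i : Fin n} (hi : 1/2 < x t i)
    (hWne : (hkN r (x t) i \ Bset x t).Nonempty) {h : ℝ}
    (hhA : ∀ j ∈ Aset x t, x t j ≤ h) (hhb : h ≤ bval x t) :
    x (t+1) i ≤ bval x t - (bval x t - h) / (n:ℝ) := by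
  have hsub := Bclique hC t hi
  have hsplit : ∑ j ∈ hkN r (x t) i \ Bset x t, x t j + ∑ j ∈ Bset x t, x t j
      = ∑ j ∈ hkN r (x t) i, x t j := Finset.sum_sdiff hsub
  have hcard : (hkN r (x t) i \ Bset x t).card + (Bset x t).card
      = (hkN r (x t) i).card := Finset.card_sdiff_add_card_eq_card hsub
  have hBc : (0:ℝ) < ((Bset x t).card : ℝ) := by
    exact_mod_cast card_pos.mpr (Bset_nonempty hC t)
  have hSB : ∑ j ∈ Bset x t, x t j = ((Bset x t).card : ℝ) * bval x t := by
    rw [bval, mul_div_cancel₀]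
    exact ne_of_gt hBc
  have hSW : ∑ j ∈ hkN r (x t) i \ Bset x t, x t j
      ≤ ((hkN r (x t) i \ Bset x t).card : ℝ) * h := by
    have := Finset.sum_le_card_nsmul (hkN r (x t) i \ Bset x t) (x t) h
      (fun j hj => hhA j (Wsub hC t hj))
    simpa [nsmul_eq_mul] using this
  have hmain := two_block_upper (S1 := ∑ j ∈ hkN r (x t) i \ Bset x t, x t j)
    (S2 := ∑ j ∈ Bset x t, x t j)
    (A := ((hkN r (x t) i \ Bset x t).card : ℝ)) (V := ((Bset x t).card : ℝ))
    (k := ((hkN r (x t) i).card : ℝ)) (c1 := h) (c2 := bval x t) (NN := (n:ℝ))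
    (by push_cast [← hcard]; ring) (cardR_pos hWne) (cardR_pos (Bset_nonempty hC t))
    (by exact_mod_cast card_le_n _) hSW (le_of_eq hSB) hhb
  rw [hC.hHK t i, ← hsplit]
  exact hmain


/-- generic progress at a cross-link step -/
lemma progress_G (hC : Ctx n r x) (t : ℕ) (hcr : Cross r x t) :
    aval x t + (1/2 - aval x t) / ((n:ℝ)*n) ≤ aval x (t+1) ∨
    bval x (t+1) ≤ bval x t - (bval x t - 1/2) / ((n:ℝ)*n) := by
  have hn1 : (1:ℝ) ≤ (n:ℝ) := by exact_mod_cast hC.hn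
  have hn0 : (0:ℝ) < (n:ℝ) := by linarith
  have ha2 := aval_le_half hC t
  have hb2 := half_lt_bval hC t
  obtain ⟨i, j, hjN, hcase⟩ := hcr
  have hLU : aval x t + (1/2 - aval x t)/(n:ℝ) ≤ x (t+1) i ∧
      x (t+1) i ≤ bval x t - (bval x t - 1/2)/(n:ℝ) := by
    rcases hcase with ⟨hi, hj⟩ | ⟨hi, hj⟩
    · have hVne : (hkN r (x t) i \ Aset x t).Nonempty :=
        ⟨j, Finset.mem_sdiff.mpr ⟨hjN, fun hjA => by
          have := mem_Aset.mp hjA; linarith⟩⟩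
      refine ⟨Amover_lower hC t hi hVne (l := 1/2)
        (fun k hk => le_of_lt (mem_Bset.mp hk)) ha2, ?_⟩
      exact Amover_upper hC t hi hVne (h := 1/2)
        (fun k hk => mem_Aset.mp hk) (le_of_lt hb2)
    · have hWne : (hkN r (x t) i \ Bset x t).Nonempty :=
        ⟨j, Finset.mem_sdiff.mpr ⟨hjN, fun hjB => by
          have := mem_Bset.mp hjB; linarith⟩⟩
      constructor
      · have hmain := Bmover_lower hC t hi hWne
        have h2 : (1/2 - aval x t)/(n:ℝ) ≤ (bval x t - aval x t)/(n:ℝ) := by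
          gcongr <;> linarith
        linarith
      · exact Bmover_upper hC t hi hWne (h := 1/2) (fun k hk => mem_Aset.mp hk) (le_of_lt hb2)
  by_cases hv : x (t+1) i ≤ 1/2
  · left
    have hiA : i ∈ Aset x (t+1) := mem_Aset.mpr hv
    have hd : (0:ℝ) ≤ (1/2 - aval x t)/(n:ℝ) := by
      apply div_nonneg (by linarith) (le_of_lt hn0)
    have hboost := avg_boost (s := Aset x (t+1)) hiA (N := n) (card_le_n _)
      (f := x (t+1)) (c := aval x t) (d := (1/2 - aval x t)/(n:ℝ))
      (fun k _ => (sandwich hC t k).1) hLU.1 hd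
    rw [div_div] at hboost
    exact hboost
  · right
    push_neg at hv
    have hiB : i ∈ Bset x (t+1) := mem_Bset.mpr hv
    have hd : (0:ℝ) ≤ (bval x t - 1/2)/(n:ℝ) := by
      apply div_nonneg (by linarith) (le_of_lt hn0)
    have hdrop := avg_drop (s := Bset x (t+1)) hiB (N := n) (card_le_n _)
      (f := x (t+1)) (c := bval x t) (d := (bval x t - 1/2)/(n:ℝ))
      (fun k _ => (sandwich hC t k).2) hLU.2 hd
    rw [div_div] at hdrop
    exact hdrop

/-- progress when all B-values are identically 1 -/
lemma progress_U (hC : Ctx n r x) (hU : ∀ s jj, 1/2 < x s jj → x s jj = 1)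
    (t : ℕ) (hcr : Cross r x t) :
    aval x t + 1/(2*((n:ℝ)*n)) ≤ aval x (t+1) := by
  have hn1 : (1:ℝ) ≤ (n:ℝ) := by exact_mod_cast hC.hn
  have hn0 : (0:ℝ) < (n:ℝ) := by linarith
  have ha2 := aval_le_half hC t
  have hb2 := half_lt_bval hC t
  have hb1 : bval x t = 1 := by
    apply le_antisymm (bval_le_one hC t)
    exact le_avg (Bset_nonempty hC t) (fun j hj => (hU t j (mem_Bset.mp hj)).ge)
  obtain ⟨i, j, hjN, hcase⟩ := hcr
  have hLU : aval x t + (1 - aval x t)/(n:ℝ) ≤ x (t+1) i ∧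
      x (t+1) i ≤ 1 - (1 - 1/2)/(n:ℝ) := by
    rcases hcase with ⟨hi, hj⟩ | ⟨hi, hj⟩
    · have hVne : (hkN r (x t) i \ Aset x t).Nonempty :=
        ⟨j, Finset.mem_sdiff.mpr ⟨hjN, fun hjA => by
          have := mem_Aset.mp hjA; linarith⟩⟩
      constructor
      · exact Amover_lower hC t hi hVne (l := 1) (fun k hk => (hU t k (mem_Bset.mp hk)).ge) (by linarith)
      · have := Amover_upper hC t hi hVne (h := 1/2) (fun k hk => mem_Aset.mp hk) (le_of_lt hb2)
        rw [hb1] at this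
        exact this
    · have hWne : (hkN r (x t) i \ Bset x t).Nonempty :=
        ⟨j, Finset.mem_sdiff.mpr ⟨hjN, fun hjB => by
          have := mem_Bset.mp hjB; linarith⟩⟩
      constructor
      · have := Bmover_lower hC t hi hWne
        rw [hb1] at this
        exact this
      · have := Bmover_upper hC t hi hWne (h := 1/2) (fun k hk => mem_Aset.mp hk) (le_of_lt hb2)
        rw [hb1] at this
        exact this
  by_cases hv : x (t+1) i ≤ 1/2
  · have hiA : i ∈ Aset x (t+1) := mem_Aset.mpr hv
    have hd : (0:ℝ) ≤ (1 - aval x t)/(n:ℝ) := by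
      apply div_nonneg (by linarith) (le_of_lt hn0)
    have hboost := avg_boost (s := Aset x (t+1)) hiA (N := n) (card_le_n _)
      (f := x (t+1)) (c := aval x t) (d := (1 - aval x t)/(n:ℝ))
      (fun k _ => (sandwich hC t k).1) hLU.1 hd
    rw [div_div] at hboost
    have hkey2 : 1/(2*((n:ℝ)*n)) ≤ (1 - aval x t)/((n:ℝ)*n) := by
      rw [div_le_div_iff₀ (by positivity) (by positivity)]
      nlinarith
    have e : aval x (t+1)
        = (∑ j ∈ Aset x (t+1), x (t+1) j) / (((Aset x (t+1)).card : ℕ) : ℝ) := rfl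
    rw [e]
    linarith [hboost, hkey2]
  · exfalso
    push_neg at hv
    have := hU (t+1) i hv
    have h2 : x (t+1) i ≤ 1 - (1 - 1/2)/(n:ℝ) := hLU.2
    have h3 : (0:ℝ) < (1 - 1/2)/(n:ℝ) := by positivity
    linarith

/-- progress when all A-values are identically 0 -/
lemma progress_Z (hC : Ctx n r x) (hZ : ∀ s jj, x s jj ≤ 1/2 → x s jj = 0)
    (t : ℕ) (hcr : Cross r x t) :
    bval x (t+1) ≤ bval x t - 1/(2*((n:ℝ)*n)) := by
  have hn1 : (1:ℝ) ≤ (n:ℝ) := by exact_mod_cast hC.hn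
  have hn0 : (0:ℝ) < (n:ℝ) := by linarith
  have ha2 := aval_le_half hC t
  have hb2 := half_lt_bval hC t
  have ha0 : aval x t = 0 := by
    apply le_antisymm ?_ (aval_nonneg hC t)
    exact avg_le (Aset_nonempty hC t) (fun j hj => (hZ t j (mem_Aset.mp hj)).le)
  obtain ⟨i, j, hjN, hcase⟩ := hcr
  have hLU : 1/(2*(n:ℝ)) ≤ x (t+1) i ∧
      x (t+1) i ≤ bval x t - bval x t/(n:ℝ) := by
    rcases hcase with ⟨hi, hj⟩ | ⟨hi, hj⟩
    · have hVne : (hkN r (x t) i \ Aset x t).Nonempty :=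
        ⟨j, Finset.mem_sdiff.mpr ⟨hjN, fun hjA => by
          have := mem_Aset.mp hjA; linarith⟩⟩
      constructor
      · have := Amover_lower hC t hi hVne (l := 1/2)
          (fun k hk => le_of_lt (mem_Bset.mp hk)) ha2
        rw [ha0] at this
        calc 1/(2*(n:ℝ)) = 0 + (1/2 - 0)/(n:ℝ) := by ring
          _ ≤ x (t+1) i := this
      · have := Amover_upper hC t hi hVne (h := 0)
          (fun k hk => (hZ t k (mem_Aset.mp hk)).le) (by linarith)
        calc x (t+1) i ≤ bval x t - (bval x t - 0)/(n:ℝ) := this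
          _ = bval x t - bval x t/(n:ℝ) := by ring
    · have hWne : (hkN r (x t) i \ Bset x t).Nonempty :=
        ⟨j, Finset.mem_sdiff.mpr ⟨hjN, fun hjB => by
          have := mem_Bset.mp hjB; linarith⟩⟩
      constructor
      · have := Bmover_lower hC t hi hWne
        rw [ha0] at this
        have hmono : (1/2:ℝ)/(n:ℝ) ≤ (bval x t)/(n:ℝ) := by
          gcongr <;> linarith
        calc 1/(2*(n:ℝ)) = (1/2:ℝ)/(n:ℝ) := by ring
          _ ≤ (bval x t)/(n:ℝ) := hmono
          _ ≤ x (t+1) i := by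
              calc (bval x t)/(n:ℝ) = 0 + (bval x t - 0)/(n:ℝ) := by ring
                _ ≤ x (t+1) i := this
      · have := Bmover_upper hC t hi hWne (h := 0)
          (fun k hk => (hZ t k (mem_Aset.mp hk)).le) (by linarith)
        calc x (t+1) i ≤ bval x t - (bval x t - 0)/(n:ℝ) := this
          _ = bval x t - bval x t/(n:ℝ) := by ring
  by_cases hv : x (t+1) i ≤ 1/2
  · exfalso
    have := hZ (t+1) i hv
    have h3 : (0:ℝ) < 1/(2*(n:ℝ)) := by positivity
    linarith [hLU.1]
  · push_neg at hv
    have hiB : i ∈ Bset x (t+1) := mem_Bset.mpr hv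
    have hup : x (t+1) i ≤ bval x t - 1/(2*(n:ℝ)) := by
      have hmono : (1/2:ℝ)/(n:ℝ) ≤ (bval x t)/(n:ℝ) := by
        gcongr <;> linarith
      have : (1:ℝ)/(2*(n:ℝ)) = (1/2:ℝ)/(n:ℝ) := by ring
      linarith [hLU.2]
    have hd : (0:ℝ) ≤ 1/(2*(n:ℝ)) := by positivity
    have hdrop := avg_drop (s := Bset x (t+1)) hiB (N := n) (card_le_n _)
      (f := x (t+1)) (c := bval x t) (d := 1/(2*(n:ℝ)))
      (fun k _ => (sandwich hC t k).2) hup hd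
    have heq : 1/(2*(n:ℝ))/(n:ℝ) = 1/(2*((n:ℝ)*n)) := by ring
    rw [heq] at hdrop
    exact hdrop

theorem ctx_false (hC : Ctx n r x) : False := by
  classical
  have hn1 : (1:ℝ) ≤ (n:ℝ) := by exact_mod_cast hC.hn
  have hn0 : (0:ℝ) < (n:ℝ) := by linarith
  have hnn1 : (1:ℝ) ≤ (n:ℝ)*(n:ℝ) := by nlinarith
  have hnn0 : (0:ℝ) < (n:ℝ)*(n:ℝ) := by nlinarith
  set q : ℝ := 1 - 1/((n:ℝ)*n) with hq
  have hq0 : 0 ≤ q := by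
    have h1 : 1/((n:ℝ)*n) ≤ 1 := by
      rw [div_le_one hnn0]; linarith
    rw [hq]; linarith
  have hq1 : q < 1 := by
    have h1 : 0 < 1/((n:ℝ)*n) := by positivity
    rw [hq]; linarith
  have hcross : ∀ t, ∃ s, t ≤ s ∧ Cross r x s := by
    intro t
    rcases cross_or_cross hC t with h | h
    · exact ⟨t, le_refl t, h⟩
    · exact ⟨t+1, Nat.le_succ t, h⟩
  by_cases hP : ∀ t, ∃ s, t ≤ s ∧ (aval x s + (1/2 - aval x s)/((n:ℝ)*n) ≤ aval x (s+1))
  · -- aval → 1/2, forcing bval ≡ 1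
    have hu := contract_to_zero (fun t => 1/2 - aval x t) q hq0 hq1
      (fun s t hst => by linarith [aval_mono hC hst])
      (by linarith [aval_nonneg hC 0])
      (fun t => by linarith [aval_le_half hC t])
      (by
        intro t
        obtain ⟨s, hs, hPs⟩ := hP t
        refine ⟨s, hs, ?_⟩
        have e : q * (1/2 - aval x s) = (1/2 - aval x s) - (1/2 - aval x s)/((n:ℝ)*n) := by
          rw [hq]; ring
        linarith)
    have hb1 : ∀ s, bval x s = 1 := by
      intro s
      apply le_antisymm (bval_le_one hC s)
      apply le_of_forall_pos_le_add
      intro ε hε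
      obtain ⟨t0, ht0⟩ := hu ε hε
      have ht0' : 1/2 - aval x t0 < ε := ht0
      have h1 : aval x t0 ≤ aval x (max s t0) := aval_mono hC (le_max_right s t0)
      have h2 : bval x (max s t0) ≤ bval x s := bval_anti hC (le_max_left s t0)
      have h3 := gap hC (max s t0)
      linarith
    have hU : ∀ s jj, 1/2 < x s jj → x s jj = 1 := by
      intro s jj hjj
      have hmem : jj ∈ Bset x s := mem_Bset.mpr hjj
      exact all_eq_of_avg_eq (Bset_nonempty hC s) (fun k _ => (hC.hx s k).2) (hb1 s) jj hmem
    exact no_unbounded_progress (fun t => aval x t) (1/(2*((n:ℝ)*n))) (by positivity)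
      (fun s t hst => aval_mono hC hst) (fun t => aval_le_half hC t) (aval_nonneg hC 0)
      (by
        intro t
        obtain ⟨s, hs, hcr⟩ := hcross t
        exact ⟨s, hs, by linarith [progress_U hC hU s hcr]⟩)
  · push_neg at hP
    obtain ⟨t1, ht1⟩ := hP
    have hQ : ∀ t, ∃ s, t ≤ s ∧ (bval x (s+1) ≤ bval x s - (bval x s - 1/2)/((n:ℝ)*n)) := by
      intro t
      obtain ⟨s, hs, hcr⟩ := hcross (max t t1)
      rcases progress_G hC s hcr with h | h
      · exact absurd h (not_le.mpr (ht1 s (le_trans (le_max_right t t1) hs)))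
      · exact ⟨s, le_trans (le_max_left t t1) hs, h⟩
    have hw := contract_to_zero (fun t => bval x t - 1/2) q hq0 hq1
      (fun s t hst => by linarith [bval_anti hC hst])
      (by linarith [bval_le_one hC 0])
      (fun t => by linarith [half_lt_bval hC t])
      (by
        intro t
        obtain ⟨s, hs, hQs⟩ := hQ t
        refine ⟨s, hs, ?_⟩
        have e : q * (bval x s - 1/2) = (bval x s - 1/2) - (bval x s - 1/2)/((n:ℝ)*n) := by
          rw [hq]; ring
        linarith)
    have ha0 : ∀ s, aval x s = 0 := by
      intro s
      apply le_antisymm ?_ (aval_nonneg hC s)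
      have hmain : ∀ ε : ℝ, 0 < ε → aval x s ≤ 0 + ε := by
        intro ε hε
        obtain ⟨t0, ht0⟩ := hw ε hε
        have ht0' : bval x t0 - 1/2 < ε := ht0
        have h1 : bval x (max s t0) ≤ bval x t0 := bval_anti hC (le_max_right s t0)
        have h2 : aval x s ≤ aval x (max s t0) := aval_mono hC (le_max_left s t0)
        have h3 := gap hC (max s t0)
        linarith
      exact le_of_forall_pos_le_add (by simpa using hmain)
    have hZ : ∀ s jj, x s jj ≤ 1/2 → x s jj = 0 := by
      intro s jj hjj
      have hmem : jj ∈ Aset x s := mem_Aset.mpr hjj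
      have h5 : (∑ k ∈ Aset x s, x s k) / (((Aset x s).card : ℕ) : ℝ) = 0 := ha0 s
      have h4 : (∑ k ∈ Aset x s, -(x s k)) / (((Aset x s).card : ℕ) : ℝ) = 0 := by
        rw [Finset.sum_neg_distrib, neg_div, h5, neg_zero]
      have := all_eq_of_avg_eq (Aset_nonempty hC s) (f := fun k => -(x s k)) (c := 0)
        (fun k _ => by simp only [neg_nonpos]; exact (hC.hx s k).1) h4 jj hmem
      simp only [neg_eq_zero] at this
      exact this
    exact no_unbounded_progress (fun t => 1 - bval x t) (1/(2*((n:ℝ)*n))) (by positivity)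
      (fun s t hst => by linarith [bval_anti hC hst])
      (fun t => by linarith [half_lt_bval hC t])
      (by linarith [bval_le_one hC 0])
      (by
        intro t
        obtain ⟨s, hs, hcr⟩ := hcross t
        refine ⟨s, hs, ?_⟩
        linarith [progress_Z hC hZ s hcr])

theorem fix_forever (hHK : isHK r x) {T : ℕ} (hfix : x (T+1) = x T) :
    ∀ t, T ≤ t → x t = x T := by
  intro t ht
  induction t with
  | zero =>
    have hT0 : T = 0 := Nat.le_zero.mp ht
    rw [hT0]
  | succ t ih =>
    rcases Nat.lt_or_ge t T with h | h
    · have hT : T = t + 1 := by omega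
      rw [hT]
    · have hxt := ih h
      funext i
      rw [hHK t i, hxt, ← hHK T i, hfix]

end Dyn
end Stmt14

theorem stmt_14 (n : ℕ) (hn : 0 < n) (r : Fin n → ℝ) (x : ℕ → Fin n → ℝ)
    (hr : ∀ i, 0 < r i ∧ r i ≤ 1) (hx0 : ∀ i, x 0 i ∈ Set.Icc (0 : ℝ) 1)
    (hHK : isHK r x)
    (hhalf : ∀ i, (1 : ℝ) / 2 ≤ r i) :
    ∃ tstar : ℕ, ∃ xs : Fin n → ℝ, ∀ t, tstar ≤ t → ∀ i, x t i = xs i := by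
  classical
  by_cases hfix : ∃ T, x (T+1) = x T
  · obtain ⟨T, hT⟩ := hfix
    exact ⟨T, x T, fun t ht i => by rw [Stmt14.fix_forever hHK hT t ht]⟩
  · exfalso
    push_neg at hfix
    exact Stmt14.ctx_false ⟨hn, hhalf, hHK, Stmt14.range01 hn hhalf hHK hx0, hfix⟩
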